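/- Let φ(y; θ, σ²) denote the density of N(θ, σ²·I_d) on ℝ^d, and for θ ∈ ℝ^d let P̃_θ = (1/2)N(θ, σ²I_d) + (1/2)N(-θ, σ²I_d) be the symmetric two-component Gaussian mixture. If θ_0, θ_1 ∈ ℝ^d satisfy ‖θ_0‖ = ‖θ_1‖ = t ≤ σ, then the chi-square divergence satisfies χ²(P̃_{θ_1} ‖ P̃_{θ_0}) ≤ (8t²/σ⁴)·‖θ_0 - θ_1‖². -/

import Mathlib

open MeasureTheory

/-- Density of `N(θ, σ²·I_d)` on `ℝ^d`. -/
noncomputable def gaussDen (d : ℕ) (σ : ℝ) (θ y : EuclideanSpace ℝ (Fin d)) : ℝ :=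
  (2 * Real.pi * σ ^ 2) ^ (-(d : ℝ) / 2) * Real.exp (-‖y - θ‖ ^ 2 / (2 * σ ^ 2))

/-- Density of the symmetric two-component Gaussian mixture
`(1/2)N(θ, σ²I_d) + (1/2)N(-θ, σ²I_d)`. -/
noncomputable def mixDen (d : ℕ) (σ : ℝ) (θ y : EuclideanSpace ℝ (Fin d)) : ℝ :=
  (gaussDen d σ θ y + gaussDen d σ (-θ) y) / 2

open Real
open scoped RealInnerProductSpace

section Aux

variable {d : ℕ} {σ : ℝ}

lemma chiAux_integrable (hσ : 0 < σ) (w : EuclideanSpace ℝ (Fin d)) :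
    Integrable (fun y : EuclideanSpace ℝ (Fin d) =>
      Real.exp (-‖y‖ ^ 2 / (2 * σ ^ 2) + ⟪w, y⟫ / σ ^ 2)) := by
  have hb : (0:ℝ) < ((1 / (2 * σ ^ 2) : ℝ) : ℂ).re := by
    rw [Complex.ofReal_re]; positivity
  have H := (GaussianFourier.integrable_cexp_neg_mul_sq_norm_add
    (V := EuclideanSpace ℝ (Fin d)) hb ((1 / σ ^ 2 : ℝ) : ℂ) w).norm
  refine H.congr ?_
  filter_upwards with y
  have h1 : (-(((1 / (2 * σ ^ 2) : ℝ)) : ℂ) * (‖y‖:ℂ) ^ 2 + ((1 / σ ^ 2 : ℝ) : ℂ) * (⟪w, y⟫ : ℝ))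
      = ((-‖y‖ ^ 2 / (2 * σ ^ 2) + ⟪w, y⟫ / σ ^ 2 : ℝ) : ℂ) := by
    push_cast; ring
  rw [h1, ← Complex.ofReal_exp, Complex.norm_real, Real.norm_eq_abs,
    abs_of_nonneg (Real.exp_pos _).le]

lemma chiAux_integral (hσ : 0 < σ) (w : EuclideanSpace ℝ (Fin d)) :
    ∫ y : EuclideanSpace ℝ (Fin d),
      Real.exp (-‖y‖ ^ 2 / (2 * σ ^ 2) + ⟪w, y⟫ / σ ^ 2)
      = (2 * π * σ ^ 2) ^ ((d : ℝ) / 2) * Real.exp (‖w‖ ^ 2 / (2 * σ ^ 2)) := by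
  have hb : (0:ℝ) < ((1 / (2 * σ ^ 2) : ℝ) : ℂ).re := by
    rw [Complex.ofReal_re]; positivity
  have H := GaussianFourier.integral_cexp_neg_mul_sq_norm_add
    (V := EuclideanSpace ℝ (Fin d)) hb ((1 / σ ^ 2 : ℝ) : ℂ) w
  have h1 : ∀ y : EuclideanSpace ℝ (Fin d),
      (-(((1 / (2 * σ ^ 2) : ℝ)) : ℂ) * (‖y‖:ℂ) ^ 2 + ((1 / σ ^ 2 : ℝ) : ℂ) * (⟪w, y⟫ : ℝ))
      = ((-‖y‖ ^ 2 / (2 * σ ^ 2) + ⟪w, y⟫ / σ ^ 2 : ℝ) : ℂ) := by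
    intro y; push_cast; ring
  simp only [h1, ← Complex.ofReal_exp] at H
  have h2 : ((Module.finrank ℝ (EuclideanSpace ℝ (Fin d)) : ℂ) / 2)
      = (((d : ℝ) / 2 : ℝ) : ℂ) := by
    rw [finrank_euclideanSpace_fin]; push_cast; ring
  have h3 : ((π : ℂ) / ((1 / (2 * σ ^ 2) : ℝ) : ℂ)) = (((2 * π * σ ^ 2 : ℝ)) : ℂ) := by
    push_cast; field_simp
  have h4 : (((1 / σ ^ 2 : ℝ) : ℂ) ^ 2 * (‖w‖:ℂ) ^ 2 / (4 * ((1 / (2 * σ ^ 2) : ℝ) : ℂ)))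
      = ((‖w‖ ^ 2 / (2 * σ ^ 2) : ℝ) : ℂ) := by
    have hc : (σ:ℂ) ≠ 0 := by exact_mod_cast hσ.ne'
    push_cast; field_simp; ring
  rw [h2, h3, h4, ← Complex.ofReal_exp, ← Complex.ofReal_cpow (by positivity),
    ← Complex.ofReal_mul] at H
  apply Complex.ofReal_inj.mp
  rw [← H]; exact integral_ofReal.symm

lemma chiAux_cosh_eq (hσ : 0 < σ) (w : EuclideanSpace ℝ (Fin d))
    (y : EuclideanSpace ℝ (Fin d)) :
    Real.exp (-‖y‖ ^ 2 / (2 * σ ^ 2)) * Real.cosh (⟪w, y⟫ / σ ^ 2)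
      = (Real.exp (-‖y‖ ^ 2 / (2 * σ ^ 2) + ⟪w, y⟫ / σ ^ 2)
        + Real.exp (-‖y‖ ^ 2 / (2 * σ ^ 2) + ⟪-w, y⟫ / σ ^ 2)) / 2 := by
  rw [Real.cosh_eq, Real.exp_add, Real.exp_add, inner_neg_left]
  rw [show (-⟪w, y⟫ : ℝ) / σ ^ 2 = -(⟪w, y⟫ / σ ^ 2) by ring]
  rw [Real.exp_neg]
  have := Real.exp_ne_zero (⟪w, y⟫ / σ ^ 2)
  field_simp

lemma chiCosh_integrable (hσ : 0 < σ) (w : EuclideanSpace ℝ (Fin d)) :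
    Integrable (fun y : EuclideanSpace ℝ (Fin d) =>
      Real.exp (-‖y‖ ^ 2 / (2 * σ ^ 2)) * Real.cosh (⟪w, y⟫ / σ ^ 2)) := by
  refine (((chiAux_integrable hσ w).add (chiAux_integrable hσ (-w))).div_const 2).congr ?_
  filter_upwards with y
  exact (chiAux_cosh_eq hσ w y).symm

lemma chiCosh_integral (hσ : 0 < σ) (w : EuclideanSpace ℝ (Fin d)) :
    ∫ y : EuclideanSpace ℝ (Fin d),
      Real.exp (-‖y‖ ^ 2 / (2 * σ ^ 2)) * Real.cosh (⟪w, y⟫ / σ ^ 2)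
      = (2 * π * σ ^ 2) ^ ((d : ℝ) / 2) * Real.exp (‖w‖ ^ 2 / (2 * σ ^ 2)) := by
  rw [integral_congr_ae (Filter.Eventually.of_forall (chiAux_cosh_eq hσ w))]
  rw [integral_div, integral_add (chiAux_integrable hσ w) (chiAux_integrable hσ (-w)),
    chiAux_integral hσ w, chiAux_integral hσ (-w), norm_neg]
  ring

lemma chi_exp_sub_one_le (x : ℝ) (hx : 0 ≤ x) : Real.exp x - 1 ≤ x * Real.exp x := by
  have h := Real.add_one_le_exp (-x)
  rw [Real.exp_neg] at h
  have h2 : (-x + 1) * Real.exp x ≤ (Real.exp x)⁻¹ * Real.exp x :=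
    mul_le_mul_of_nonneg_right h (Real.exp_pos x).le
  rw [inv_mul_cancel₀ (Real.exp_ne_zero x)] at h2
  nlinarith

lemma chi_final (s c : ℝ) (hs0 : 0 ≤ s) (hs1 : s ≤ 1) (hc : |c| ≤ s) :
    Real.exp (-(s / 2)) * (Real.exp (2 * s) + 1 - Real.exp (s + c) - Real.exp (s - c))
      ≤ 16 * s * (s - c) := by
  have hc1 : c ≤ s := (abs_le.1 hc).2
  have hc2 : -s ≤ c := (abs_le.1 hc).1
  have e1 : rexp s - rexp c ≤ (s - c) * rexp s := by
    have hu : rexp s = rexp c * rexp (s - c) := by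
      rw [← Real.exp_add]; ring_nf
    have k := chi_exp_sub_one_le (s - c) (by linarith)
    nlinarith [Real.exp_pos c, Real.exp_pos (s - c)]
  have e2 : rexp s - rexp (-c) ≤ (s + c) * rexp s := by
    have hu : rexp s = rexp (-c) * rexp (s + c) := by
      rw [← Real.exp_add]; ring_nf
    have k := chi_exp_sub_one_le (s + c) (by linarith)
    nlinarith [Real.exp_pos (-c), Real.exp_pos (s + c)]
  have pos1 : 0 ≤ rexp s - rexp c := sub_nonneg.2 (Real.exp_le_exp.2 hc1)
  have pos2 : 0 ≤ rexp s - rexp (-c) := sub_nonneg.2 (Real.exp_le_exp.2 (by linarith))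
  have prodid : rexp (2 * s) + 1 - rexp (s + c) - rexp (s - c)
      = (rexp s - rexp c) * (rexp s - rexp (-c)) := by
    have h1 : rexp (2 * s) = rexp s * rexp s := by rw [← Real.exp_add]; ring_nf
    have h2 : rexp (s + c) = rexp s * rexp c := by rw [← Real.exp_add]
    have h3 : rexp (s - c) = rexp s * rexp (-c) := by rw [← Real.exp_add]; ring_nf
    have h4 : rexp c * rexp (-c) = 1 := by rw [← Real.exp_add]; simp
    rw [h1, h2, h3]; linear_combination -h4
  rw [prodid]
  have hXY : (rexp s - rexp c) * (rexp s - rexp (-c))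
      ≤ ((s - c) * rexp s) * ((s + c) * rexp s) := by
    apply mul_le_mul e1 e2 pos2
    exact mul_nonneg (by linarith) (Real.exp_pos s).le
  have step : rexp (-(s / 2)) * ((rexp s - rexp c) * (rexp s - rexp (-c)))
      ≤ rexp (-(s / 2)) * (((s - c) * rexp s) * ((s + c) * rexp s)) :=
    mul_le_mul_of_nonneg_left hXY (Real.exp_pos _).le
  have hre : rexp (-(s / 2)) * (((s - c) * rexp s) * ((s + c) * rexp s))
      = ((s - c) * (s + c)) * (rexp (-(s / 2)) * (rexp s * rexp s)) := by ring
  have h8 : rexp (-(s / 2)) * (rexp s * rexp s) ≤ 8 := by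
    rw [← Real.exp_add, ← Real.exp_add]
    have h2 : rexp (-(s / 2) + (s + s)) ≤ rexp 2 := Real.exp_le_exp.2 (by linarith)
    have h3 : rexp 2 = rexp 1 * rexp 1 := by rw [← Real.exp_add]; norm_num
    nlinarith [Real.exp_one_lt_d9, Real.exp_pos 1]
  have q1 : 0 ≤ (s - c) * (s + c) := mul_nonneg (by linarith) (by linarith)
  calc rexp (-(s / 2)) * ((rexp s - rexp c) * (rexp s - rexp (-c)))
      ≤ ((s - c) * (s + c)) * (rexp (-(s / 2)) * (rexp s * rexp s)) := by
        rw [← hre]; exact step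
    _ ≤ ((s - c) * (s + c)) * 8 := mul_le_mul_of_nonneg_left h8 q1
    _ ≤ 16 * s * (s - c) := by nlinarith [sq_nonneg (s - c)]

lemma chi_cosh_expand (A B : ℝ) :
    (Real.cosh A - Real.cosh B) ^ 2
      = Real.cosh (A + A) / 2 + Real.cosh (B + B) / 2 + 1
        - Real.cosh (A + B) - Real.cosh (A - B) := by
  simp only [Real.cosh_eq, Real.exp_add, Real.exp_sub, Real.exp_neg, neg_add, neg_sub]
  have hA := Real.exp_ne_zero A
  have hB := Real.exp_ne_zero B
  field_simp
  ring

end Aux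

set_option maxHeartbeats 1000000 in
/-- If `‖θ_0‖ = ‖θ_1‖ = t ≤ σ`, the chi-square divergence between the symmetric
Gaussian mixtures with means `±θ_1` and `±θ_0` satisfies
`χ²(P̃_{θ_1} ‖ P̃_{θ_0}) ≤ (8t²/σ⁴)·‖θ_0 - θ_1‖²`. -/
theorem stmt7 (d : ℕ) (σ t : ℝ) (hσ : 0 < σ)
    (θ0 θ1 : EuclideanSpace ℝ (Fin d))
    (h0 : ‖θ0‖ = t) (h1 : ‖θ1‖ = t) (ht : t ≤ σ) :
    ∫ y, (mixDen d σ θ1 y - mixDen d σ θ0 y) ^ 2 / mixDen d σ θ0 y ≤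
      8 * t ^ 2 / σ ^ 4 * ‖θ0 - θ1‖ ^ 2 := by
  have hσ2 : (0:ℝ) < σ ^ 2 := by positivity
  have hs : σ ≠ 0 := hσ.ne'
  have ht0 : 0 ≤ t := h0 ▸ norm_nonneg θ0
  set C := (2 * π * σ ^ 2) ^ (-(d : ℝ) / 2) with hC
  set K := (2 * π * σ ^ 2) ^ ((d : ℝ) / 2) with hK
  have hCpos : 0 < C := Real.rpow_pos_of_pos (by positivity) _
  have hCK : C * K = 1 := by
    rw [hC, hK, ← Real.rpow_add (by positivity)]
    rw [show -(d:ℝ) / 2 + (d:ℝ) / 2 = 0 by ring, Real.rpow_zero]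
  -- closed form for the mixture density
  have hmix : ∀ θ y : EuclideanSpace ℝ (Fin d),
      mixDen d σ θ y
        = C * Real.exp (-(‖y‖ ^ 2 + ‖θ‖ ^ 2) / (2 * σ ^ 2)) * Real.cosh (⟪θ, y⟫ / σ ^ 2) := by
    intro θ y
    have e1 : -‖y - θ‖ ^ 2 / (2 * σ ^ 2)
        = -(‖y‖ ^ 2 + ‖θ‖ ^ 2) / (2 * σ ^ 2) + ⟪θ, y⟫ / σ ^ 2 := by
      rw [norm_sub_sq_real, real_inner_comm]; field_simp; ring
    have e2 : -‖y - -θ‖ ^ 2 / (2 * σ ^ 2)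
        = -(‖y‖ ^ 2 + ‖θ‖ ^ 2) / (2 * σ ^ 2) + -(⟪θ, y⟫ / σ ^ 2) := by
      rw [sub_neg_eq_add, norm_add_sq_real, real_inner_comm]; field_simp; ring
    unfold mixDen gaussDen
    rw [e1, e2, Real.exp_add, Real.exp_add, Real.cosh_eq, Real.exp_neg, ← hC]
    ring
  have hq : ∀ y, 0 < mixDen d σ θ0 y := fun y => by
    rw [hmix θ0 y]
    exact mul_pos (mul_pos hCpos (Real.exp_pos _)) (Real.cosh_pos _)
  -- pointwise bound by an integrable majorant
  have hpw : ∀ y, (mixDen d σ θ1 y - mixDen d σ θ0 y) ^ 2 / mixDen d σ θ0 y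
      ≤ Real.exp (-t ^ 2 / (2 * σ ^ 2)) * (C * (Real.exp (-‖y‖ ^ 2 / (2 * σ ^ 2)) *
          (Real.cosh (⟪θ1, y⟫ / σ ^ 2) - Real.cosh (⟪θ0, y⟫ / σ ^ 2)) ^ 2)) := by
    intro y
    rw [hmix θ1 y, hmix θ0 y, h0, h1]
    set c1 := Real.cosh (⟪θ1, y⟫ / σ ^ 2) with hc1
    set c0 := Real.cosh (⟪θ0, y⟫ / σ ^ 2) with hc0def
    set B := C * Real.exp (-(‖y‖ ^ 2 + t ^ 2) / (2 * σ ^ 2)) with hBdef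
    have hB : B = Real.exp (-t ^ 2 / (2 * σ ^ 2)) * (C * Real.exp (-‖y‖ ^ 2 / (2 * σ ^ 2))) := by
      rw [hBdef, show -(‖y‖ ^ 2 + t ^ 2) / (2 * σ ^ 2)
        = -t ^ 2 / (2 * σ ^ 2) + -‖y‖ ^ 2 / (2 * σ ^ 2) by ring, Real.exp_add]
      ring
    have hBpos : 0 < B := mul_pos hCpos (Real.exp_pos _)
    have hc0 : 1 ≤ c0 := Real.one_le_cosh _
    have hR : Real.exp (-t ^ 2 / (2 * σ ^ 2)) * (C * (Real.exp (-‖y‖ ^ 2 / (2 * σ ^ 2)) *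
        (c1 - c0) ^ 2)) = B * (c1 - c0) ^ 2 := by
      rw [hB]; ring
    rw [hR, div_le_iff₀ (mul_pos hBpos (lt_of_lt_of_le zero_lt_one hc0))]
    nlinarith [sq_nonneg (c1 - c0), hBpos, hc0,
      mul_nonneg (mul_nonneg (mul_nonneg hBpos.le hBpos.le) (sq_nonneg (c1 - c0)))
        (sub_nonneg.2 hc0)]
  -- expansion of the majorant as a combination of integrable functions
  have hGexp : ∀ y : EuclideanSpace ℝ (Fin d),
      C * (Real.exp (-‖y‖ ^ 2 / (2 * σ ^ 2)) *
          (Real.cosh (⟪θ1, y⟫ / σ ^ 2) - Real.cosh (⟪θ0, y⟫ / σ ^ 2)) ^ 2)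
      = C * (Real.exp (-‖y‖ ^ 2 / (2 * σ ^ 2)) * Real.cosh (⟪θ1 + θ1, y⟫ / σ ^ 2)) / 2
        + C * (Real.exp (-‖y‖ ^ 2 / (2 * σ ^ 2)) * Real.cosh (⟪θ0 + θ0, y⟫ / σ ^ 2)) / 2
        + C * (Real.exp (-‖y‖ ^ 2 / (2 * σ ^ 2)) *
            Real.cosh (⟪(0 : EuclideanSpace ℝ (Fin d)), y⟫ / σ ^ 2))
        - C * (Real.exp (-‖y‖ ^ 2 / (2 * σ ^ 2)) * Real.cosh (⟪θ1 + θ0, y⟫ / σ ^ 2))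
        - C * (Real.exp (-‖y‖ ^ 2 / (2 * σ ^ 2)) * Real.cosh (⟪θ1 - θ0, y⟫ / σ ^ 2)) := by
    intro y
    have a1 : ⟪θ1 + θ1, y⟫ / σ ^ 2 = ⟪θ1, y⟫ / σ ^ 2 + ⟪θ1, y⟫ / σ ^ 2 := by
      rw [inner_add_left]; ring
    have a2 : ⟪θ0 + θ0, y⟫ / σ ^ 2 = ⟪θ0, y⟫ / σ ^ 2 + ⟪θ0, y⟫ / σ ^ 2 := by
      rw [inner_add_left]; ring
    have a3 : ⟪(0 : EuclideanSpace ℝ (Fin d)), y⟫ / σ ^ 2 = (0:ℝ) := by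
      rw [inner_zero_left]; ring
    have a4 : ⟪θ1 + θ0, y⟫ / σ ^ 2 = ⟪θ1, y⟫ / σ ^ 2 + ⟪θ0, y⟫ / σ ^ 2 := by
      rw [inner_add_left]; ring
    have a5 : ⟪θ1 - θ0, y⟫ / σ ^ 2 = ⟪θ1, y⟫ / σ ^ 2 - ⟪θ0, y⟫ / σ ^ 2 := by
      rw [inner_sub_left]; ring
    rw [a1, a2, a3, a4, a5, chi_cosh_expand, Real.cosh_zero]
    ring
  have I1 := (chiCosh_integrable hσ (θ1 + θ1)).const_mul C
  have I2 := (chiCosh_integrable hσ (θ0 + θ0)).const_mul C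
  have I3 := (chiCosh_integrable hσ (0 : EuclideanSpace ℝ (Fin d))).const_mul C
  have I4 := (chiCosh_integrable hσ (θ1 + θ0)).const_mul C
  have I5 := (chiCosh_integrable hσ (θ1 - θ0)).const_mul C
  have hcombInt : Integrable (fun y : EuclideanSpace ℝ (Fin d) =>
      C * (Real.exp (-‖y‖ ^ 2 / (2 * σ ^ 2)) * Real.cosh (⟪θ1 + θ1, y⟫ / σ ^ 2)) / 2
        + C * (Real.exp (-‖y‖ ^ 2 / (2 * σ ^ 2)) * Real.cosh (⟪θ0 + θ0, y⟫ / σ ^ 2)) / 2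
        + C * (Real.exp (-‖y‖ ^ 2 / (2 * σ ^ 2)) *
            Real.cosh (⟪(0 : EuclideanSpace ℝ (Fin d)), y⟫ / σ ^ 2))
        - C * (Real.exp (-‖y‖ ^ 2 / (2 * σ ^ 2)) * Real.cosh (⟪θ1 + θ0, y⟫ / σ ^ 2))
        - C * (Real.exp (-‖y‖ ^ 2 / (2 * σ ^ 2)) * Real.cosh (⟪θ1 - θ0, y⟫ / σ ^ 2))) :=
    ((((I1.div_const 2).add (I2.div_const 2)).add I3).sub I4).sub I5
  have hGint : Integrable (fun y : EuclideanSpace ℝ (Fin d) =>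
      Real.exp (-t ^ 2 / (2 * σ ^ 2)) * (C * (Real.exp (-‖y‖ ^ 2 / (2 * σ ^ 2)) *
          (Real.cosh (⟪θ1, y⟫ / σ ^ 2) - Real.cosh (⟪θ0, y⟫ / σ ^ 2)) ^ 2))) := by
    refine (hcombInt.const_mul (Real.exp (-t ^ 2 / (2 * σ ^ 2)))).congr ?_
    filter_upwards with y
    rw [hGexp y]
  have hmono : ∫ y, (mixDen d σ θ1 y - mixDen d σ θ0 y) ^ 2 / mixDen d σ θ0 y
      ≤ ∫ y, Real.exp (-t ^ 2 / (2 * σ ^ 2)) * (C * (Real.exp (-‖y‖ ^ 2 / (2 * σ ^ 2)) *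
          (Real.cosh (⟪θ1, y⟫ / σ ^ 2) - Real.cosh (⟪θ0, y⟫ / σ ^ 2)) ^ 2)) := by
    refine integral_mono_of_nonneg (Filter.Eventually.of_forall fun y => ?_) hGint
      (Filter.Eventually.of_forall hpw)
    exact div_nonneg (sq_nonneg _) (hq y).le
  have hcombVal : ∫ y : EuclideanSpace ℝ (Fin d),
      (C * (Real.exp (-‖y‖ ^ 2 / (2 * σ ^ 2)) * Real.cosh (⟪θ1 + θ1, y⟫ / σ ^ 2)) / 2
        + C * (Real.exp (-‖y‖ ^ 2 / (2 * σ ^ 2)) * Real.cosh (⟪θ0 + θ0, y⟫ / σ ^ 2)) / 2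
        + C * (Real.exp (-‖y‖ ^ 2 / (2 * σ ^ 2)) *
            Real.cosh (⟪(0 : EuclideanSpace ℝ (Fin d)), y⟫ / σ ^ 2))
        - C * (Real.exp (-‖y‖ ^ 2 / (2 * σ ^ 2)) * Real.cosh (⟪θ1 + θ0, y⟫ / σ ^ 2))
        - C * (Real.exp (-‖y‖ ^ 2 / (2 * σ ^ 2)) * Real.cosh (⟪θ1 - θ0, y⟫ / σ ^ 2)))
      = C * (K * Real.exp (‖θ1 + θ1‖ ^ 2 / (2 * σ ^ 2))) / 2
        + C * (K * Real.exp (‖θ0 + θ0‖ ^ 2 / (2 * σ ^ 2))) / 2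
        + C * (K * Real.exp (‖(0 : EuclideanSpace ℝ (Fin d))‖ ^ 2 / (2 * σ ^ 2)))
        - C * (K * Real.exp (‖θ1 + θ0‖ ^ 2 / (2 * σ ^ 2)))
        - C * (K * Real.exp (‖θ1 - θ0‖ ^ 2 / (2 * σ ^ 2))) := by
    have K1 : Integrable (fun y : EuclideanSpace ℝ (Fin d) => C * (Real.exp (-‖y‖ ^ 2 / (2 * σ ^ 2)) * Real.cosh (⟪θ1 + θ1, y⟫ / σ ^ 2)) / 2) := I1.div_const 2
    have K2 : Integrable (fun y : EuclideanSpace ℝ (Fin d) => C * (Real.exp (-‖y‖ ^ 2 / (2 * σ ^ 2)) * Real.cosh (⟪θ0 + θ0, y⟫ / σ ^ 2)) / 2) := I2.div_const 2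
    have J1 : Integrable (fun y : EuclideanSpace ℝ (Fin d) => C * (Real.exp (-‖y‖ ^ 2 / (2 * σ ^ 2)) * Real.cosh (⟪θ1 + θ1, y⟫ / σ ^ 2)) / 2 + C * (Real.exp (-‖y‖ ^ 2 / (2 * σ ^ 2)) * Real.cosh (⟪θ0 + θ0, y⟫ / σ ^ 2)) / 2) := K1.add K2
    have J2 : Integrable (fun y : EuclideanSpace ℝ (Fin d) => C * (Real.exp (-‖y‖ ^ 2 / (2 * σ ^ 2)) * Real.cosh (⟪θ1 + θ1, y⟫ / σ ^ 2)) / 2 + C * (Real.exp (-‖y‖ ^ 2 / (2 * σ ^ 2)) * Real.cosh (⟪θ0 + θ0, y⟫ / σ ^ 2)) / 2 + C * (Real.exp (-‖y‖ ^ 2 / (2 * σ ^ 2)) * Real.cosh (⟪(0 : EuclideanSpace ℝ (Fin d)), y⟫ / σ ^ 2))) := J1.add I3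
    have J3 : Integrable (fun y : EuclideanSpace ℝ (Fin d) => C * (Real.exp (-‖y‖ ^ 2 / (2 * σ ^ 2)) * Real.cosh (⟪θ1 + θ1, y⟫ / σ ^ 2)) / 2 + C * (Real.exp (-‖y‖ ^ 2 / (2 * σ ^ 2)) * Real.cosh (⟪θ0 + θ0, y⟫ / σ ^ 2)) / 2 + C * (Real.exp (-‖y‖ ^ 2 / (2 * σ ^ 2)) * Real.cosh (⟪(0 : EuclideanSpace ℝ (Fin d)), y⟫ / σ ^ 2)) - C * (Real.exp (-‖y‖ ^ 2 / (2 * σ ^ 2)) * Real.cosh (⟪θ1 + θ0, y⟫ / σ ^ 2))) := J2.sub I4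
    rw [integral_sub J3 I5, integral_sub J2 I4, integral_add J1 I3, integral_add K1 K2,
      integral_div, integral_div, integral_const_mul, integral_const_mul,
      integral_const_mul, integral_const_mul, integral_const_mul,
      chiCosh_integral hσ (θ1 + θ1), chiCosh_integral hσ (θ0 + θ0),
      chiCosh_integral hσ (0 : EuclideanSpace ℝ (Fin d)),
      chiCosh_integral hσ (θ1 + θ0), chiCosh_integral hσ (θ1 - θ0), ← hK]
  set ip := ⟪θ1, θ0⟫ with hip
  have n1 : ‖θ1 + θ1‖ ^ 2 = 4 * t ^ 2 := by
    rw [norm_add_sq_real, real_inner_self_eq_norm_sq, h1]; ring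
  have n2 : ‖θ0 + θ0‖ ^ 2 = 4 * t ^ 2 := by
    rw [norm_add_sq_real, real_inner_self_eq_norm_sq, h0]; ring
  have n4 : ‖θ1 + θ0‖ ^ 2 = 2 * t ^ 2 + 2 * ip := by
    rw [norm_add_sq_real, h0, h1, hip]; ring
  have n5 : ‖θ1 - θ0‖ ^ 2 = 2 * t ^ 2 - 2 * ip := by
    rw [norm_sub_sq_real, h0, h1, hip]; ring
  have n6 : ‖θ0 - θ1‖ ^ 2 = 2 * t ^ 2 - 2 * ip := by
    rw [norm_sub_sq_real, real_inner_comm, h0, h1, hip]; ring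
  have hCS : |ip| ≤ t ^ 2 := by
    have := abs_real_inner_le_norm θ1 θ0
    rw [h0, h1] at this
    calc |ip| = |⟪θ1, θ0⟫| := by rw [hip]
      _ ≤ t * t := this
      _ = t ^ 2 := by ring
  have hfin := chi_final (t ^ 2 / σ ^ 2) (ip / σ ^ 2)
    (by positivity)
    ((div_le_one hσ2).2 (by nlinarith))
    (by rw [abs_div, abs_of_pos hσ2]
        exact (div_le_div_iff_of_pos_right hσ2).2 hCS)
  have hfun : (fun y : EuclideanSpace ℝ (Fin d) =>
      Real.exp (-t ^ 2 / (2 * σ ^ 2)) * (C * (Real.exp (-‖y‖ ^ 2 / (2 * σ ^ 2)) *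
          (Real.cosh (⟪θ1, y⟫ / σ ^ 2) - Real.cosh (⟪θ0, y⟫ / σ ^ 2)) ^ 2)))
      = fun y : EuclideanSpace ℝ (Fin d) => Real.exp (-t ^ 2 / (2 * σ ^ 2)) *
        (C * (Real.exp (-‖y‖ ^ 2 / (2 * σ ^ 2)) * Real.cosh (⟪θ1 + θ1, y⟫ / σ ^ 2)) / 2
        + C * (Real.exp (-‖y‖ ^ 2 / (2 * σ ^ 2)) * Real.cosh (⟪θ0 + θ0, y⟫ / σ ^ 2)) / 2
        + C * (Real.exp (-‖y‖ ^ 2 / (2 * σ ^ 2)) *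
            Real.cosh (⟪(0 : EuclideanSpace ℝ (Fin d)), y⟫ / σ ^ 2))
        - C * (Real.exp (-‖y‖ ^ 2 / (2 * σ ^ 2)) * Real.cosh (⟪θ1 + θ0, y⟫ / σ ^ 2))
        - C * (Real.exp (-‖y‖ ^ 2 / (2 * σ ^ 2)) * Real.cosh (⟪θ1 - θ0, y⟫ / σ ^ 2))) :=
    funext fun y => by rw [hGexp y]
  have collapse : ∀ X : ℝ, C * (K * X) = X := fun X => by
    rw [← mul_assoc, hCK, one_mul]
  have q3 : Real.exp (‖(0 : EuclideanSpace ℝ (Fin d))‖ ^ 2 / (2 * σ ^ 2)) = 1 := by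
    rw [norm_zero]
    norm_num
  calc ∫ y, (mixDen d σ θ1 y - mixDen d σ θ0 y) ^ 2 / mixDen d σ θ0 y
      ≤ ∫ y, Real.exp (-t ^ 2 / (2 * σ ^ 2)) * (C * (Real.exp (-‖y‖ ^ 2 / (2 * σ ^ 2)) *
          (Real.cosh (⟪θ1, y⟫ / σ ^ 2) - Real.cosh (⟪θ0, y⟫ / σ ^ 2)) ^ 2)) := hmono
    _ = Real.exp (-t ^ 2 / (2 * σ ^ 2)) *
        (Real.exp (‖θ1 + θ1‖ ^ 2 / (2 * σ ^ 2)) / 2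
          + Real.exp (‖θ0 + θ0‖ ^ 2 / (2 * σ ^ 2)) / 2
          + 1
          - Real.exp (‖θ1 + θ0‖ ^ 2 / (2 * σ ^ 2))
          - Real.exp (‖θ1 - θ0‖ ^ 2 / (2 * σ ^ 2))) := by
        rw [hfun, integral_const_mul, hcombVal]
        simp only [collapse]
        rw [q3]
    _ ≤ 8 * t ^ 2 / σ ^ 4 * ‖θ0 - θ1‖ ^ 2 := by
        rw [n1, n2, n4, n5, n6]
        have q1 : -t ^ 2 / (2 * σ ^ 2) = -(t ^ 2 / σ ^ 2 / 2) := by ring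
        have q2 : 4 * t ^ 2 / (2 * σ ^ 2) = 2 * (t ^ 2 / σ ^ 2) := by
          field_simp; ring
        have q4 : (2 * t ^ 2 + 2 * ip) / (2 * σ ^ 2) = t ^ 2 / σ ^ 2 + ip / σ ^ 2 := by
          field_simp
        have q5 : (2 * t ^ 2 - 2 * ip) / (2 * σ ^ 2) = t ^ 2 / σ ^ 2 - ip / σ ^ 2 := by
          field_simp
        have q6 : 16 * (t ^ 2 / σ ^ 2) * (t ^ 2 / σ ^ 2 - ip / σ ^ 2)
            = 8 * t ^ 2 / σ ^ 4 * (2 * t ^ 2 - 2 * ip) := by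
          field_simp; ring
        rw [q1, q2, q4, q5]
        rw [q6] at hfin
        have : Real.exp (2 * (t ^ 2 / σ ^ 2)) / 2 + Real.exp (2 * (t ^ 2 / σ ^ 2)) / 2
            = Real.exp (2 * (t ^ 2 / σ ^ 2)) := by ring
        calc Real.exp (-(t ^ 2 / σ ^ 2 / 2)) *
              (Real.exp (2 * (t ^ 2 / σ ^ 2)) / 2 + Real.exp (2 * (t ^ 2 / σ ^ 2)) / 2 + 1
                - Real.exp (t ^ 2 / σ ^ 2 + ip / σ ^ 2)
                - Real.exp (t ^ 2 / σ ^ 2 - ip / σ ^ 2))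
            = Real.exp (-(t ^ 2 / σ ^ 2 / 2)) *
              (Real.exp (2 * (t ^ 2 / σ ^ 2)) + 1
                - Real.exp (t ^ 2 / σ ^ 2 + ip / σ ^ 2)
                - Real.exp (t ^ 2 / σ ^ 2 - ip / σ ^ 2)) := by ring
          _ ≤ 8 * t ^ 2 / σ ^ 4 * (2 * t ^ 2 - 2 * ip) := hfin
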